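/- arXiv:1312.4023 — 8 statements merged into one kernel-verified Lean document; each statement's English description precedes it below -/
import Mathlib

section
/- Let M be a right R-module and m ∈ M. Then the cyclic submodule mR is not δ-small in M if and only if there exists a maximal submodule N of M such that m ∉ N and M/N is singular. -/
/-- A submodule `K` of `M` is *essential* in `M` if it has nonzero intersection with
every nonzero submodule of `M`. -/
def IsEssentialSubmodule {R M : Type*} [Ring R] [AddCommGroup M] [Module R M]
    (K : Submodule R M) : Prop :=
  ∀ N : Submodule R M, N ≠ ⊥ → K ⊓ N ≠ ⊥

/-- A module `M` is *singular* if the annihilator of every element of `M` is an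
essential ideal of `R`. -/
def IsSingularModule (R M : Type*) [Ring R] [AddCommGroup M] [Module R M] : Prop :=
  ∀ x : M, IsEssentialSubmodule (LinearMap.ker (LinearMap.toSpanSingleton R M x))

/-- A submodule `N` of `M` is *δ-small* in `M` if whenever `M = N + X` with `M/X`
singular, we have `X = M`. -/
def IsDeltaSmall (R : Type*) {M : Type*} [Ring R] [AddCommGroup M] [Module R M]
    (N : Submodule R M) : Prop :=
  ∀ X : Submodule R M, N ⊔ X = ⊤ → IsSingularModule R (M ⧸ X) → X = ⊤

lemma essential_mono {R M : Type*} [Ring R] [AddCommGroup M] [Module R M]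
    {K K' : Submodule R M} (h : K ≤ K') (hK : IsEssentialSubmodule K) :
    IsEssentialSubmodule K' := by
  intro N hN hKN
  exact hK N hN (eq_bot_iff.2 (le_trans (inf_le_inf_right N h) hKN.le))

lemma singular_quotient_of_le {R M : Type*} [Ring R] [AddCommGroup M] [Module R M]
    {X N : Submodule R M} (h : X ≤ N) (hX : IsSingularModule R (M ⧸ X)) :
    IsSingularModule R (M ⧸ N) := by
  intro y
  obtain ⟨x, rfl⟩ := N.mkQ_surjective y
  refine essential_mono ?_ (hX (X.mkQ x))
  intro r hr
  simp only [LinearMap.mem_ker, LinearMap.toSpanSingleton_apply] at hr ⊢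
  rw [← map_smul, Submodule.mkQ_apply, Submodule.Quotient.mk_eq_zero] at hr
  rw [← map_smul, Submodule.mkQ_apply, Submodule.Quotient.mk_eq_zero]
  exact h hr

theorem cyclic_not_deltaSmall_iff_exists_maximal
    {R M : Type*} [Ring R] [AddCommGroup M] [Module R M] (m : M) :
    ¬ IsDeltaSmall R (Submodule.span R {m}) ↔
      ∃ N : Submodule R M, IsCoatom N ∧ m ∉ N ∧ IsSingularModule R (M ⧸ N) := by
  constructor
  · intro h
    simp only [IsDeltaSmall, not_forall] at h
    obtain ⟨X, hsup, hsing, hXne⟩ := h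
    have hmX : m ∉ X := by
      intro hm
      apply hXne
      rw [← hsup, sup_eq_right.2 ((Submodule.span_singleton_le_iff_mem m X).2 hm)]
    -- Zorn's lemma on submodules containing X and avoiding m
    set S : Set (Submodule R M) := {K | X ≤ K ∧ m ∉ K} with hS
    have hzorn : ∃ N, X ≤ N ∧ Maximal (· ∈ S) N := by
      apply zorn_le_nonempty₀ S ?_ X ⟨le_refl X, hmX⟩
      intro c hcS hc y hy
      refine ⟨sSup c, ⟨?_, ?_⟩, fun z hz => le_sSup hz⟩
      · exact le_trans (hcS hy).1 (le_sSup hy)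
      · intro hm
        rw [Submodule.mem_sSup_of_directed ⟨y, hy⟩ hc.directedOn] at hm
        obtain ⟨z, hz, hmz⟩ := hm
        exact (hcS hz).2 hmz
    obtain ⟨N, _, hmax⟩ := hzorn
    obtain ⟨hXN, hmN⟩ := hmax.1
    refine ⟨N, ⟨?_, ?_⟩, hmN, singular_quotient_of_le hXN hsing⟩
    · intro hN; exact hmN (hN ▸ Submodule.mem_top)
    · intro K hK
      have hmK : m ∈ K := by
        by_contra hmK
        exact hK.ne' (le_antisymm (hmax.2 ⟨le_trans hXN hK.le, hmK⟩ hK.le) hK.le)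
      rw [← top_le_iff, ← hsup]
      exact sup_le ((Submodule.span_singleton_le_iff_mem m K).2 hmK)
        (le_trans hXN hK.le)
  · rintro ⟨N, hN, hmN, hsing⟩ h
    have : Submodule.span R {m} ⊔ N = ⊤ :=
      hN.2 (Submodule.span R {m} ⊔ N) (lt_of_le_of_ne le_sup_right fun he =>
        hmN (he ▸ Submodule.mem_sup_left (Submodule.mem_span_singleton_self m)))
    exact hN.1 (h N this hsing)
end

section
/- Every direct summand of a principally δ-lifting right R-module is a principally δ-lifting module. -/
/-- A module `M` is *principally δ-lifting* if for each `m ∈ M` there is a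
decomposition `M = A ⊕ B` with `A ≤ mR` and `mR ∩ B` δ-small in `B`. -/
def IsPrinDeltaLifting (R M : Type*) [Ring R] [AddCommGroup M] [Module R M] : Prop :=
  ∀ m : M, ∃ A B : Submodule R M, A ≤ Submodule.span R {m} ∧ IsCompl A B ∧
    IsDeltaSmall R ((Submodule.span R {m} ⊓ B).comap B.subtype)

section Aux

variable {R M M' : Type*} [Ring R] [AddCommGroup M] [Module R M]
  [AddCommGroup M'] [Module R M']

lemma isSingularModule_of_equiv (e : M ≃ₗ[R] M') (h : IsSingularModule R M) :
    IsSingularModule R M' := by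
  intro x
  have hk : LinearMap.ker (LinearMap.toSpanSingleton R M' x)
      = LinearMap.ker (LinearMap.toSpanSingleton R M (e.symm x)) := by
    ext r
    simp only [LinearMap.mem_ker, LinearMap.toSpanSingleton_apply]
    constructor
    · intro hr
      have := congrArg e.symm hr
      simpa using this
    · intro hr
      have := congrArg e hr
      simpa using this
  rw [hk]
  exact h _

lemma isDeltaSmall_map_equiv (e : M ≃ₗ[R] M') (N : Submodule R M)
    (h : IsDeltaSmall R N) : IsDeltaSmall R (N.map (e : M →ₗ[R] M')) := by
  intro X hX hsing
  set f := Submodule.orderIsoMapComap e with hf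
  have hfN : N.map (e : M →ₗ[R] M') = f N := rfl
  have hsup : N ⊔ f.symm X = ⊤ := by
    apply f.injective
    rw [map_sup, map_top, f.apply_symm_apply, ← hfN, hX]
  have hmap : (f.symm X).map (e : M →ₗ[R] M') = X := by
    have := f.apply_symm_apply X
    exact this
  have hsing' : IsSingularModule R (M ⧸ f.symm X) :=
    isSingularModule_of_equiv
      (Submodule.Quotient.equiv (f.symm X) X e hmap).symm hsing
  have : f.symm X = ⊤ := h _ hsup hsing'
  apply f.symm.injective
  rw [this, map_top]

lemma isDeltaSmall_comap_of_isCompl {N L D : Submodule R M} (hNL : N ≤ L)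
    (hc : IsCompl L D) (h : IsDeltaSmall R N) :
    IsDeltaSmall R (N.comap L.subtype) := by
  intro X hX hsing
  set X' := X.map L.subtype ⊔ D with hX'def
  have hXle : X.map L.subtype ≤ L := Submodule.map_subtype_le _ _
  have hmapX : N ⊔ X.map L.subtype = L := by
    have h1 := congrArg (Submodule.map L.subtype) hX
    rw [Submodule.map_sup, Submodule.map_top, Submodule.range_subtype,
      Submodule.map_comap_eq, Submodule.range_subtype,
      inf_eq_right.mpr hNL] at h1
    exact h1
  have hsup : N ⊔ X' = ⊤ := by
    rw [hX'def, ← sup_assoc, hmapX]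
    exact hc.sup_eq_top
  have hinf : X' ⊓ L = X.map L.subtype := by
    rw [hX'def, sup_inf_assoc_of_le _ hXle, hc.disjoint.symm.eq_bot, sup_bot_eq]
  have hsing' : IsSingularModule R (M ⧸ X') := by
    intro y
    obtain ⟨x, rfl⟩ := Submodule.Quotient.mk_surjective X' y
    have hx : x ∈ L ⊔ D := by rw [hc.sup_eq_top]; trivial
    obtain ⟨l, hl, d, hd, rfl⟩ := Submodule.mem_sup.mp hx
    have hdz : (Submodule.Quotient.mk (l + d) : M ⧸ X') = Submodule.Quotient.mk l := by
      rw [Submodule.Quotient.eq]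
      simpa using Submodule.mem_sup_right hd
    rw [hdz]
    have hk : LinearMap.ker (LinearMap.toSpanSingleton R (M ⧸ X')
          (Submodule.Quotient.mk l))
        = LinearMap.ker (LinearMap.toSpanSingleton R ((↥L) ⧸ X)
          (Submodule.Quotient.mk ⟨l, hl⟩)) := by
      ext r
      simp only [LinearMap.mem_ker, LinearMap.toSpanSingleton_apply,
        ← Submodule.Quotient.mk_smul, Submodule.Quotient.mk_eq_zero]
      constructor
      · intro hr
        have hrl : r • l ∈ X' ⊓ L := ⟨hr, L.smul_mem r hl⟩
        rw [hinf] at hrl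
        obtain ⟨z, hz, hze⟩ := hrl
        have : z = r • (⟨l, hl⟩ : L) := by
          apply Subtype.ext
          simpa using hze
        rwa [this] at hz
      · intro hr
        have : r • l ∈ X.map L.subtype :=
          ⟨r • ⟨l, hl⟩, hr, rfl⟩
        exact Submodule.mem_sup_left this
    rw [hk]
    exact hsing _
  have hX'top : X' = ⊤ := h _ hsup hsing'
  have hLX : X.map L.subtype = L := by
    rw [← hinf, hX'top, top_inf_eq]
  have : X.map L.subtype = (⊤ : Submodule R ↥L).map L.subtype := by
    rw [Submodule.map_top, Submodule.range_subtype, hLX]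
  exact Submodule.map_injective_of_injective L.injective_subtype this

end Aux

theorem directSummand_isPrinDeltaLifting
    {R M : Type*} [Ring R] [AddCommGroup M] [Module R M]
    (hM : IsPrinDeltaLifting R M) (K K' : Submodule R M) (hK : IsCompl K K') :
    IsPrinDeltaLifting R K := by
  intro m
  obtain ⟨A, B, hA, hAB, hδ⟩ := hM (m : M)
  have hspan : Submodule.span R {(m : M)} ≤ K :=
    Submodule.span_le.mpr (by simp)
  have hAK : A ≤ K := hA.trans hspan
  set A₁ : Submodule R ↥K := A.comap K.subtype with hA₁
  set B₁ : Submodule R ↥K := (K ⊓ B).comap K.subtype with hB₁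
  have hmapspan : (Submodule.span R {m}).map K.subtype = Submodule.span R {(m : M)} := by
    rw [Submodule.map_span, Set.image_singleton, Submodule.subtype_apply]
  have hspan_iff : ∀ y : ↥K, (y ∈ Submodule.span R {m} ↔ (y : M) ∈ Submodule.span R {(m : M)}) := by
    intro y
    constructor
    · intro hy
      exact hmapspan ▸ Submodule.mem_map_of_mem hy
    · intro hy
      rw [← hmapspan] at hy
      obtain ⟨z, hz, hzy⟩ := hy
      rwa [show z = y from Subtype.ext hzy] at hz
  have h1 : A₁ ≤ Submodule.span R {m} := by
    intro x hx
    exact (hspan_iff x).mpr (hA hx)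
  have hKsub : ∀ k ∈ K, k ∈ A ⊔ (K ⊓ B) := by
    intro k hk
    have hks : k ∈ A ⊔ B := by rw [hAB.sup_eq_top]; trivial
    obtain ⟨a, ha, b, hb, rfl⟩ := Submodule.mem_sup.mp hks
    refine Submodule.mem_sup.mpr ⟨a, ha, b, ⟨?_, hb⟩, rfl⟩
    have := K.sub_mem hk (hAK ha)
    simpa using this
  have hcompl : IsCompl A₁ B₁ := by
    constructor
    · rw [disjoint_iff, eq_bot_iff]
      rintro x ⟨hxA, hxB⟩
      have hx : (x : M) ∈ A ⊓ B := ⟨hxA, hxB.2⟩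
      rw [hAB.disjoint.eq_bot] at hx
      have : (x : M) = 0 := hx
      simpa [Submodule.mem_bot] using Subtype.ext this
    · rw [codisjoint_iff, eq_top_iff]
      rintro x -
      obtain ⟨a, ha, b, hb, hab⟩ := Submodule.mem_sup.mp (hKsub (x : M) x.2)
      refine Submodule.mem_sup.mpr ⟨⟨a, hAK ha⟩, ?_, ⟨b, hb.1⟩, ?_, Subtype.ext ?_⟩
      · exact ha
      · exact hb
      · exact hab
  set L : Submodule R ↥B := (K ⊓ B).comap B.subtype with hL
  set D : Submodule R ↥B := (B ⊓ (A ⊔ K')).comap B.subtype with hD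
  have hNL : (Submodule.span R {(m : M)} ⊓ B).comap B.subtype ≤ L := by
    intro x hx
    exact ⟨hspan hx.1, x.2⟩
  have hLD : IsCompl L D := by
    constructor
    · rw [disjoint_iff, eq_bot_iff]
      rintro x ⟨hxL, hxD⟩
      obtain ⟨a, ha, k', hk', hak⟩ := Submodule.mem_sup.mp hxD.2
      rw [Submodule.subtype_apply] at hak
      have hk'K : k' ∈ K := by
        have : (x : M) - a ∈ K := K.sub_mem hxL.1 (hAK ha)
        rw [← hak] at this
        simpa using this
      have hk0 : k' = 0 := by
        have : k' ∈ K ⊓ K' := ⟨hk'K, hk'⟩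
        rwa [hK.disjoint.eq_bot] at this
      have hxa : (x : M) = a := by rw [← hak, hk0, add_zero]
      have hx0 : (x : M) ∈ A ⊓ B := ⟨hxa ▸ ha, x.2⟩
      rw [hAB.disjoint.eq_bot] at hx0
      have : (x : M) = 0 := hx0
      simpa [Submodule.mem_bot] using Subtype.ext this
    · rw [codisjoint_iff, eq_top_iff]
      rintro x -
      have hx : (x : M) ∈ K ⊔ K' := by rw [hK.sup_eq_top]; trivial
      obtain ⟨k, hk, k', hk', hkk⟩ := Submodule.mem_sup.mp hx
      obtain ⟨a, ha, l, hl, hal⟩ := Submodule.mem_sup.mp (hKsub k hk)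
      have hlB : l ∈ B := hl.2
      have haK' : a + k' ∈ B := by
        have : (x : M) - l ∈ B := B.sub_mem x.2 hlB
        have hxl : (x : M) - l = a + k' := by
          rw [← hkk, ← hal]; abel
        rwa [hxl] at this
      refine Submodule.mem_sup.mpr ⟨⟨l, hlB⟩, hl, ⟨a + k', haK'⟩, ?_, Subtype.ext ?_⟩
      · exact ⟨haK', Submodule.mem_sup.mpr ⟨a, ha, k', hk', rfl⟩⟩
      · show l + (a + k') = (x : M)
        rw [← hkk, ← hal]; abel
  have hδ2 : IsDeltaSmall R
      (((Submodule.span R {(m : M)} ⊓ B).comap B.subtype).comap L.subtype) :=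
    isDeltaSmall_comap_of_isCompl hNL hLD hδ
  set e : ↥L ≃ₗ[R] ↥B₁ :=
    (Submodule.comapSubtypeEquivOfLe (inf_le_right : K ⊓ B ≤ B)).trans
      (Submodule.comapSubtypeEquivOfLe (inf_le_left : K ⊓ B ≤ K)).symm with he
  have hmain := isDeltaSmall_map_equiv e _ hδ2
  have hcoe : ∀ x : ↥B₁, ((e.symm x : ↥B) : M) = ((x : ↥K) : M) := by
    intro x
    set f := Submodule.comapSubtypeEquivOfLe (inf_le_right : K ⊓ B ≤ B) with hf
    set g := Submodule.comapSubtypeEquivOfLe (inf_le_left : K ⊓ B ≤ K) with hg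
    have he2 : e.symm x = f.symm (g x) := rfl
    have h3 : ((f (f.symm (g x)) : ↥(K ⊓ B)) : M) = ((f.symm (g x) : ↥B) : M) :=
      Submodule.comapSubtypeEquivOfLe_apply_coe _ _
    rw [f.apply_symm_apply] at h3
    have h4 : ((g x : ↥(K ⊓ B)) : M) = ((x : ↥K) : M) :=
      Submodule.comapSubtypeEquivOfLe_apply_coe _ _
    rw [he2, ← h3, h4]
  have heq : (((Submodule.span R {(m : M)} ⊓ B).comap B.subtype).comap L.subtype).map
        (e : ↥L →ₗ[R] ↥B₁)
      = (Submodule.span R {m} ⊓ B₁).comap B₁.subtype := by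
    ext x
    rw [Submodule.mem_map_equiv]
    simp only [Submodule.mem_comap, Submodule.subtype_apply, Submodule.mem_inf]
    constructor
    · rintro ⟨hsp, -⟩
      rw [hcoe x] at hsp
      exact ⟨(hspan_iff _).mpr hsp, x.2⟩
    · rintro ⟨hsp, -⟩
      refine ⟨?_, (e.symm x : ↥B).2⟩
      rw [hcoe x]
      exact (hspan_iff _).mp hsp
  rw [heq] at hmain
  exact ⟨A₁, B₁, h1, hcompl, hmain⟩
end

section
/- A right R-module M is principally δ-lifting if and only if every cyclic submodule C of M can be written as C = N ⊕ S, where N is a direct summand of M and S is δ-small in M. -/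
section Aux

variable {R M M₂ : Type*} [Ring R] [AddCommGroup M] [Module R M]
  [AddCommGroup M₂] [Module R M₂]

lemma kerQuot (X : Submodule R M) (m : M) :
    LinearMap.ker (LinearMap.toSpanSingleton R (M ⧸ X) (Submodule.Quotient.mk m)) =
      X.comap (LinearMap.toSpanSingleton R M m) := by
  ext r
  simp [LinearMap.mem_ker, LinearMap.toSpanSingleton_apply, ← Submodule.Quotient.mk_smul,
    Submodule.Quotient.mk_eq_zero]

lemma deltaSmall_mono {S T : Submodule R M} (hST : S ≤ T) (hT : IsDeltaSmall R T) :
    IsDeltaSmall R S := fun X hX hs =>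
  hT X (top_le_iff.mp (hX ▸ sup_le_sup_right hST X)) hs

lemma singular_quot_comap (f : M →ₗ[R] M₂) (X : Submodule R M₂)
    (h : IsSingularModule R (M₂ ⧸ X)) : IsSingularModule R (M ⧸ X.comap f) := by
  intro x
  obtain ⟨m, rfl⟩ := Submodule.Quotient.mk_surjective _ x
  rw [kerQuot]
  have h2 := h (Submodule.Quotient.mk (f m))
  rw [kerQuot] at h2
  have : X.comap (LinearMap.toSpanSingleton R M₂ (f m)) =
      (X.comap f).comap (LinearMap.toSpanSingleton R M m) := by
    ext r
    simp [LinearMap.toSpanSingleton_apply, map_smul]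
  rwa [this] at h2

lemma deltaSmall_map (f : M →ₗ[R] M₂) {S : Submodule R M} (hS : IsDeltaSmall R S) :
    IsDeltaSmall R (S.map f) := by
  intro X hX hsing
  have h1 : S ⊔ X.comap f = ⊤ := by
    rw [eq_top_iff]
    intro m _
    have hm : f m ∈ S.map f ⊔ X := hX ▸ Submodule.mem_top
    obtain ⟨y, hy, z, hz, hyz⟩ := Submodule.mem_sup.mp hm
    obtain ⟨s, hs, rfl⟩ := hy
    refine Submodule.mem_sup.mpr ⟨s, hs, m - s, ?_, by abel⟩
    have : f (m - s) = z := by rw [map_sub, ← hyz]; abel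
    simpa [Submodule.mem_comap, this] using hz
  have h3 := hS _ h1 (singular_quot_comap f X hsing)
  rw [eq_top_iff, ← hX]
  refine sup_le ?_ le_rfl
  rintro _ ⟨s, hs, rfl⟩
  have : s ∈ X.comap f := h3 ▸ Submodule.mem_top
  exact this

lemma deltaSmall_of_comap (B : Submodule R M) {S : Submodule R M} (hSB : S ≤ B)
    (h : IsDeltaSmall R (S.comap B.subtype)) : IsDeltaSmall R S := by
  intro X hX hsing
  have h1 : S.comap B.subtype ⊔ X.comap B.subtype = ⊤ := by
    rw [eq_top_iff]
    rintro ⟨b, hb⟩ _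
    have hm : b ∈ S ⊔ X := hX ▸ Submodule.mem_top
    obtain ⟨s, hs, x, hx, hsx⟩ := Submodule.mem_sup.mp hm
    refine Submodule.mem_sup.mpr ⟨⟨s, hSB hs⟩, hs, ⟨b - s, sub_mem hb (hSB hs)⟩, ?_, ?_⟩
    · have : b - s = x := by rw [← hsx]; abel
      simpa [Submodule.mem_comap, this] using hx
    · ext; simp
  have h3 := h _ h1 (singular_quot_comap B.subtype X hsing)
  have hBX : B ≤ X := by
    intro b hb
    have : (⟨b, hb⟩ : B) ∈ X.comap B.subtype := h3 ▸ Submodule.mem_top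
    exact this
  rw [eq_top_iff, ← hX]
  exact sup_le (hSB.trans hBX) le_rfl

lemma deltaSmall_comap_of_isCompl {A B : Submodule R M} (hc : IsCompl A B)
    {S : Submodule R M} (hSB : S ≤ B) (hS : IsDeltaSmall R S) :
    IsDeltaSmall R (S.comap B.subtype) := by
  intro X' hX' hsing
  set X : Submodule R M := X'.map B.subtype ⊔ A with hXdef
  have hmapB : X'.map B.subtype ≤ B := Submodule.map_subtype_le B X'
  have hXB : X ⊓ B = X'.map B.subtype := by
    rw [hXdef, sup_inf_assoc_of_le _ hmapB, hc.inf_eq_bot, sup_bot_eq]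
  have h1 : S ⊔ X = ⊤ := by
    rw [eq_top_iff]
    intro m _
    have hm : m ∈ A ⊔ B := hc.sup_eq_top ▸ Submodule.mem_top
    obtain ⟨a, ha, b, hb, rfl⟩ := Submodule.mem_sup.mp hm
    have hb' : (⟨b, hb⟩ : B) ∈ S.comap B.subtype ⊔ X' := hX' ▸ Submodule.mem_top
    obtain ⟨s, hs, x, hx, hsx⟩ := Submodule.mem_sup.mp hb'
    have hbe : b = (s : M) + (x : M) := by
      have := congrArg (Subtype.val) hsx; simpa using this.symm
    refine Submodule.mem_sup.mpr ⟨(s : M), hs, a + (x : M), ?_, by rw [hbe]; abel⟩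
    exact add_mem (Submodule.mem_sup_right ha)
      (Submodule.mem_sup_left (Submodule.mem_map_of_mem hx))
  have h2 : IsSingularModule R (M ⧸ X) := by
    intro z
    obtain ⟨m, rfl⟩ := Submodule.Quotient.mk_surjective _ z
    have hm : m ∈ A ⊔ B := hc.sup_eq_top ▸ Submodule.mem_top
    obtain ⟨a, ha, b, hb, rfl⟩ := Submodule.mem_sup.mp hm
    have hmk : (Submodule.Quotient.mk (a + b) : M ⧸ X) = Submodule.Quotient.mk b := by
      rw [Submodule.Quotient.eq]
      simpa using Submodule.mem_sup_right ha
    rw [hmk, kerQuot]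
    have h4 := hsing (Submodule.Quotient.mk (⟨b, hb⟩ : B))
    rw [kerQuot] at h4
    have : X'.comap (LinearMap.toSpanSingleton R B ⟨b, hb⟩) =
        X.comap (LinearMap.toSpanSingleton R M b) := by
      ext r
      simp only [Submodule.mem_comap, LinearMap.toSpanSingleton_apply]
      constructor
      · intro h
        have : r • b ∈ X'.map B.subtype := ⟨r • ⟨b, hb⟩, h, rfl⟩
        exact (le_sup_left : X'.map B.subtype ≤ X) this
      · intro h
        have hrb : r • b ∈ X ⊓ B := ⟨h, Submodule.smul_mem _ _ hb⟩
        rw [hXB] at hrb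
        obtain ⟨y, hy, hy2⟩ := hrb
        have : y = r • (⟨b, hb⟩ : B) := Subtype.ext hy2
        rwa [← this]
    rwa [this] at h4
  have h3 := hS X h1 h2
  have hmap : X'.map B.subtype = (⊤ : Submodule R B).map B.subtype := by
    rw [← hXB, h3, top_inf_eq, Submodule.map_subtype_top]
  exact Submodule.map_injective_of_injective B.injective_subtype hmap

end Aux

theorem isPrinDeltaLifting_iff_cyclic_decomp
    {R M : Type*} [Ring R] [AddCommGroup M] [Module R M] :
    IsPrinDeltaLifting R M ↔
      ∀ m : M, ∃ N S : Submodule R M, N ⊔ S = Submodule.span R {m} ∧ N ⊓ S = ⊥ ∧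
        (∃ N' : Submodule R M, IsCompl N N') ∧ IsDeltaSmall R S := by
  constructor
  · intro h m
    obtain ⟨A, B, hA, hc, hδ⟩ := h m
    refine ⟨A, Submodule.span R {m} ⊓ B, ?_, ?_, ⟨B, hc⟩, ?_⟩
    · rw [inf_comm, ← sup_inf_assoc_of_le _ hA, hc.sup_eq_top, top_inf_eq]
    · exact eq_bot_iff.mpr (le_trans (inf_le_inf_left A inf_le_right) hc.inf_eq_bot.le)
    · exact deltaSmall_of_comap B inf_le_right hδ
  · intro h m
    obtain ⟨N, S, hNS, hdisj, ⟨N', hc⟩, hS⟩ := h m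
    refine ⟨N, N', le_sup_left.trans hNS.le, hc, ?_⟩
    apply deltaSmall_comap_of_isCompl hc inf_le_right
    set π : M →ₗ[R] M := N'.subtype ∘ₗ (N'.projectionOnto N hc.symm) with hπdef
    refine deltaSmall_mono (T := S.map π) ?_ (deltaSmall_map π hS)
    rintro x ⟨hxs, hxN'⟩
    rw [← hNS] at hxs
    obtain ⟨n, hn, s, hs, rfl⟩ := Submodule.mem_sup.mp hxs
    have hπx : π (n + s) = n + s := by
      simpa [hπdef] using congrArg Subtype.val
        (Submodule.projectionOnto_apply_left hc.symm ⟨n + s, hxN'⟩)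
    have hπn : π n = 0 := by
      have := Submodule.projectionOnto_apply_of_mem_right hc.symm hn
      simp [hπdef, this, hn]
    exact ⟨s, hs, by rw [← hπx, map_add, hπn, zero_add]⟩
end

section
/- A right R-module M is principally δ-lifting if and only if for every cyclic submodule C of M there is a direct summand A of M with A ⊆ C such that C/A is δ-small in M/A. -/
lemma singular_congr {R M N : Type*} [Ring R] [AddCommGroup M] [Module R M]
    [AddCommGroup N] [Module R N] (e : M ≃ₗ[R] N) (h : IsSingularModule R M) :
    IsSingularModule R N := by
  intro x
  have hk : LinearMap.ker (LinearMap.toSpanSingleton R N x)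
      = LinearMap.ker (LinearMap.toSpanSingleton R M (e.symm x)) := by
    ext r
    simp only [LinearMap.mem_ker, LinearMap.toSpanSingleton_apply]
    rw [← map_smul, LinearEquiv.map_eq_zero_iff]
  rw [hk]; exact h _

lemma deltaSmall_map_s6 {R M N : Type*} [Ring R] [AddCommGroup M] [Module R M]
    [AddCommGroup N] [Module R N] (e : M ≃ₗ[R] N) (K : Submodule R M)
    (h : IsDeltaSmall R K) : IsDeltaSmall R (K.map (e : M →ₗ[R] N)) := by
  intro X hX hsing
  have hmap : (X.comap (e : M →ₗ[R] N)).map (e : M →ₗ[R] N) = X :=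
    Submodule.map_comap_eq_of_surjective e.surjective X
  have hX' : K ⊔ X.comap (e : M →ₗ[R] N) = ⊤ := by
    rw [eq_top_iff]
    rintro x -
    have hx : e x ∈ (⊤ : Submodule R N) := trivial
    rw [← hX] at hx
    obtain ⟨k', ⟨k, hk, rfl⟩, y, hy, hxy⟩ := Submodule.mem_sup.mp hx
    refine Submodule.mem_sup.mpr ⟨k, hk, x - k, ?_, by abel⟩
    have hy' : y = e (x - k) := by
      rw [map_sub]
      exact eq_sub_of_add_eq' hxy
    exact Submodule.mem_comap.mpr (by rw [show (e : M →ₗ[R] N) (x - k) = e (x - k) from rfl, ← hy']; exact hy)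
  have hsing' : IsSingularModule R (M ⧸ X.comap (e : M →ₗ[R] N)) :=
    singular_congr (Submodule.Quotient.equiv (X.comap (e : M →ₗ[R] N)) X e hmap).symm hsing
  have := h _ hX' hsing'
  rw [← hmap, this, Submodule.map_top, LinearEquiv.range]

lemma deltaSmall_map_iff {R M N : Type*} [Ring R] [AddCommGroup M] [Module R M]
    [AddCommGroup N] [Module R N] (e : M ≃ₗ[R] N) (K : Submodule R M) :
    IsDeltaSmall R (K.map (e : M →ₗ[R] N)) ↔ IsDeltaSmall R K := by
  constructor
  · intro h
    have := deltaSmall_map_s6 e.symm _ h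
    rwa [← Submodule.map_comp, LinearEquiv.comp_coe, LinearEquiv.self_trans_symm,
      LinearEquiv.refl_toLinearMap, Submodule.map_id] at this
  · exact deltaSmall_map_s6 e K

lemma key {R M : Type*} [Ring R] [AddCommGroup M] [Module R M] (m : M)
    (A B : Submodule R M) (hA : A ≤ Submodule.span R {m}) (hc : IsCompl A B) :
    IsDeltaSmall R ((Submodule.span R {m} ⊓ B).comap B.subtype) ↔
    IsDeltaSmall R ((Submodule.span R {m}).map A.mkQ) := by
  set e := (Submodule.quotientEquivOfIsCompl A B hc).symm
  have hmap : ((Submodule.span R {m} ⊓ B).comap B.subtype).map (e : B →ₗ[R] M ⧸ A)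
      = (Submodule.span R {m}).map A.mkQ := by
    ext q
    simp only [Submodule.mem_map, Submodule.mem_comap, Submodule.mem_inf]
    constructor
    · rintro ⟨⟨b, hbB⟩, ⟨hbs, _⟩, rfl⟩
      exact ⟨b, hbs, by simp [e]⟩
    · rintro ⟨x, hx, rfl⟩
      have hxT : x ∈ A ⊔ B := by rw [hc.codisjoint.eq_top]; exact Submodule.mem_top
      obtain ⟨a, haA, b, hbB, rfl⟩ := Submodule.mem_sup.mp hxT
      have hbs : b ∈ Submodule.span R {m} := by
        have : (a + b) - a ∈ Submodule.span R {m} := Submodule.sub_mem _ hx (hA haA)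
        simpa using this
      refine ⟨⟨b, hbB⟩, ⟨hbs, hbB⟩, ?_⟩
      show (Submodule.Quotient.mk b : M ⧸ A) = Submodule.Quotient.mk (a + b)
      rw [Submodule.Quotient.eq]
      simpa using A.neg_mem haA
  rw [← hmap, deltaSmall_map_iff]

theorem isPrinDeltaLifting_iff_quotient_deltaSmall
    {R M : Type*} [Ring R] [AddCommGroup M] [Module R M] :
    IsPrinDeltaLifting R M ↔
      ∀ m : M, ∃ A : Submodule R M, (∃ A' : Submodule R M, IsCompl A A') ∧
        A ≤ Submodule.span R {m} ∧
        IsDeltaSmall R ((Submodule.span R {m}).map A.mkQ) := by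
  constructor
  · intro hP m
    obtain ⟨A, B, hA, hc, hs⟩ := hP m
    exact ⟨A, ⟨B, hc⟩, hA, (key m A B hA hc).mp hs⟩
  · intro h m
    obtain ⟨A, ⟨B, hc⟩, hA, hs⟩ := h m
    exact ⟨A, B, hA, hc, (key m A B hA hc).mpr hs⟩
end

section
/- A right R-module M is principally δ-lifting if and only if for every cyclic submodule C of M there is an idempotent e in the endomorphism ring End(M) such that e(M) ⊆ C and (1−e)(C) is δ-small in (1−e)(M). -/
section Aux

variable {R M : Type*} [Ring R] [AddCommGroup M] [Module R M]

lemma range_one_sub_eq_ker {e : Module.End R M} (he : IsIdempotentElem e) :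
    LinearMap.range (1 - e) = LinearMap.ker e := by
  ext x
  constructor
  · rintro ⟨y, rfl⟩
    simp only [LinearMap.mem_ker, LinearMap.sub_apply, Module.End.one_apply, map_sub]
    have : e (e y) = e y := congrFun (congrArg DFunLike.coe he) y
    simp [this]
  · intro hx
    exact ⟨x, by simp [LinearMap.mem_ker.mp hx]⟩

lemma map_one_sub_eq_inf_ker {e : Module.End R M} (he : IsIdempotentElem e)
    {C : Submodule R M} (hC : LinearMap.range e ≤ C) :
    C.map (1 - e) = C ⊓ LinearMap.ker e := by
  ext x
  constructor
  · rintro ⟨y, hy, rfl⟩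
    refine ⟨?_, ?_⟩
    · have : e y ∈ C := hC ⟨y, rfl⟩
      simpa using C.sub_mem hy this
    · have : e (e y) = e y := congrFun (congrArg DFunLike.coe he) y
      simp [LinearMap.mem_ker, this]
  · rintro ⟨hxC, hxk⟩
    exact ⟨x, hxC, by simp [LinearMap.mem_ker.mp hxk]⟩

lemma isCompl_range_ker {e : Module.End R M} (he : IsIdempotentElem e) :
    IsCompl (LinearMap.range e) (LinearMap.ker e) := by
  have hee : ∀ y, e (e y) = e y := fun y => congrFun (congrArg DFunLike.coe he) y
  constructor
  · rw [disjoint_iff]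
    ext x
    simp only [Submodule.mem_inf, Submodule.mem_bot]
    constructor
    · rintro ⟨⟨y, rfl⟩, hk⟩
      have := LinearMap.mem_ker.mp hk
      rw [hee] at this
      exact this
    · rintro rfl; simp
  · rw [codisjoint_iff, eq_top_iff]
    intro x _
    have : x = e x + (x - e x) := by abel
    rw [this]
    exact Submodule.add_mem_sup ⟨x, rfl⟩ (by simp [LinearMap.mem_ker, hee])

end Aux

theorem isPrinDeltaLifting_iff_idempotent
    {R M : Type*} [Ring R] [AddCommGroup M] [Module R M] :
    IsPrinDeltaLifting R M ↔
      ∀ m : M, ∃ e : Module.End R M, IsIdempotentElem e ∧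
        LinearMap.range e ≤ Submodule.span R {m} ∧
        IsDeltaSmall R
          (((Submodule.span R {m}).map (1 - e)).comap (LinearMap.range (1 - e)).subtype) := by
  constructor
  · intro h m
    obtain ⟨A, B, hA, hcompl, hsmall⟩ := h m
    set e : Module.End R M := A.subtype ∘ₗ A.projectionOnto B hcompl with he_def
    have he : IsIdempotentElem e := by
      apply LinearMap.ext
      intro x
      simp [he_def, Submodule.projectionOnto_apply_left]
    have hrange : LinearMap.range e = A := by
      rw [he_def, LinearMap.range_comp, Submodule.linearProjOfIsCompl_range,
        Submodule.map_top, Submodule.range_subtype]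
    have hker : LinearMap.ker e = B := by
      rw [he_def, LinearMap.ker_comp, Submodule.ker_subtype, Submodule.comap_bot,
        Submodule.linearProjOfIsCompl_ker]
    refine ⟨e, he, hrange ▸ hA, ?_⟩
    rw [range_one_sub_eq_ker he, map_one_sub_eq_inf_ker he (hrange ▸ hA), hker]
    exact hsmall
  · intro h m
    obtain ⟨e, he, hrange, hsmall⟩ := h m
    refine ⟨LinearMap.range e, LinearMap.ker e, hrange, isCompl_range_ker he, ?_⟩
    rw [range_one_sub_eq_ker he, map_one_sub_eq_inf_ker he hrange] at hsmall
    exact hsmall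
end

section
/- Let M = M₁ ⊕ M₂ be a right R-module which is an internal direct sum of submodules M₁ and M₂, where M₁ and M₂ are both principally δ-lifting. If M is a duo module, then M is principally δ-lifting. -/
section aux
variable {R M P Q : Type*} [Ring R] [AddCommGroup M] [Module R M]
  [AddCommGroup P] [Module R P] [AddCommGroup Q] [Module R Q]

lemma aux_essential_mono {K K' : Submodule R M} (h : K ≤ K')
    (hK : IsEssentialSubmodule K) : IsEssentialSubmodule K' := fun N hN hbot =>
  hK N hN (eq_bot_iff.2 ((inf_le_inf_right N h).trans hbot.le))

lemma aux_singular_of_injective {f : P →ₗ[R] Q} (hf : Function.Injective f)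
    (hQ : IsSingularModule R Q) : IsSingularModule R P := by
  intro x
  have hker : LinearMap.ker (LinearMap.toSpanSingleton R P x)
      = LinearMap.ker (LinearMap.toSpanSingleton R Q (f x)) := by
    ext r
    simp only [LinearMap.mem_ker, LinearMap.toSpanSingleton_apply]
    constructor
    · intro h; rw [← map_smul, h, map_zero]
    · intro h; apply hf; rw [map_smul, h, map_zero]
  rw [hker]; exact hQ (f x)

lemma aux_singular_of_surjective {f : P →ₗ[R] Q} (hf : Function.Surjective f)
    (hP : IsSingularModule R P) : IsSingularModule R Q := by
  intro x
  obtain ⟨y, rfl⟩ := hf x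
  refine aux_essential_mono ?_ (hP y)
  intro r hr
  simp only [LinearMap.mem_ker, LinearMap.toSpanSingleton_apply] at hr ⊢
  rw [← map_smul, hr, map_zero]

lemma aux_deltaSmall_map {f : P →ₗ[R] Q} (hf : Function.Injective f)
    {X : Submodule R P} (hX : IsDeltaSmall R X) : IsDeltaSmall R (X.map f) := by
  intro Y hsup hsing
  have hY' : X ⊔ Y.comap f = ⊤ := by
    rw [eq_top_iff]
    intro p _
    have hp : f p ∈ X.map f ⊔ Y := by rw [hsup]; exact Submodule.mem_top
    obtain ⟨y, hy, z, hz, hyz⟩ := Submodule.mem_sup.1 hp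
    obtain ⟨x, hx, rfl⟩ := hy
    have hpx : p - x ∈ Y.comap f := by
      have hz' : f (p - x) = z := by rw [map_sub, ← hyz]; abel
      simpa [Submodule.mem_comap, hz'] using hz
    exact Submodule.mem_sup.2 ⟨x, hx, p - x, hpx, by abel⟩
  have hg : Function.Injective (Submodule.mapQ (Y.comap f) Y f le_rfl) := by
    rw [← LinearMap.ker_eq_bot, eq_bot_iff]
    intro a ha
    obtain ⟨p, rfl⟩ := Submodule.Quotient.mk_surjective _ a
    simp only [LinearMap.mem_ker, Submodule.mapQ_apply, Submodule.Quotient.mk_eq_zero] at ha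
    simpa [Submodule.mem_bot, Submodule.Quotient.mk_eq_zero] using ha
  have htop : Y.comap f = ⊤ :=
    hX (Y.comap f) hY' (aux_singular_of_injective hg hsing)
  have hle : X.map f ≤ Y := by
    rintro _ ⟨x, hx, rfl⟩
    have : x ∈ Y.comap f := by rw [htop]; exact Submodule.mem_top
    exact this
  rw [← hsup, sup_eq_right.2 hle]

lemma aux_deltaSmall_sup {N₁ N₂ : Submodule R M} (h₁ : IsDeltaSmall R N₁)
    (h₂ : IsDeltaSmall R N₂) : IsDeltaSmall R (N₁ ⊔ N₂) := by
  intro Y hsup hsing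
  have hq : Function.Surjective (Submodule.mapQ Y (N₂ ⊔ Y) LinearMap.id le_sup_right) := by
    intro a
    obtain ⟨p, rfl⟩ := Submodule.Quotient.mk_surjective _ a
    exact ⟨Submodule.Quotient.mk p, by simp [Submodule.mapQ_apply]⟩
  have hstep : N₂ ⊔ Y = ⊤ :=
    h₁ (N₂ ⊔ Y) (by rw [← sup_assoc]; exact hsup) (aux_singular_of_surjective hq hsing)
  exact h₂ Y hstep hsing

end aux

section transfer
variable {R M : Type*} [Ring R] [AddCommGroup M] [Module R M]

lemma aux_transfer {M₁ : Submodule R M} {B₁ : Submodule R ↥M₁} {B : Submodule R M}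
    (hle : B₁.map M₁.subtype ≤ B) {S : Submodule R ↥M₁}
    (hd : IsDeltaSmall R ((S ⊓ B₁).comap B₁.subtype)) :
    IsDeltaSmall R ((S.map M₁.subtype ⊓ B₁.map M₁.subtype).comap B.subtype) := by
  have hg : ∀ x : ↥B₁, (M₁.subtype ∘ₗ B₁.subtype) x ∈ B := fun x =>
    hle ⟨x, x.2, rfl⟩
  set g : ↥B₁ →ₗ[R] ↥B := LinearMap.codRestrict B (M₁.subtype ∘ₗ B₁.subtype) hg with hgdef
  have hginj : Function.Injective g := by
    intro a b hab
    apply Subtype.ext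
    apply Subtype.ext
    simpa [hgdef, LinearMap.codRestrict_apply] using Subtype.ext_iff.mp hab
  have hmap : ((S ⊓ B₁).comap B₁.subtype).map g
      = (S.map M₁.subtype ⊓ B₁.map M₁.subtype).comap B.subtype := by
    ext x
    constructor
    · rintro ⟨b, hb, rfl⟩
      obtain ⟨hbS, hbB₁⟩ := hb
      exact ⟨⟨↑b, hbS, rfl⟩, ⟨↑b, hbB₁, rfl⟩⟩
    · rintro ⟨hxS, hxB⟩
      obtain ⟨c, hc, hcx⟩ := hxB
      refine ⟨⟨c, hc⟩, ⟨?_, hc⟩, Subtype.ext hcx⟩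
      obtain ⟨s, hsS, hsx⟩ := hxS
      have hsc : s = c := Subtype.ext (hsx.trans hcx.symm)
      exact hsc ▸ hsS
  rw [← hmap]
  exact aux_deltaSmall_map hginj hd

end transfer

theorem isPrinDeltaLifting_of_duo_directSum
    {R M : Type*} [Ring R] [AddCommGroup M] [Module R M]
    (M₁ M₂ : Submodule R M) (hcompl : IsCompl M₁ M₂)
    (h₁ : IsPrinDeltaLifting R M₁) (h₂ : IsPrinDeltaLifting R M₂)
    (hduo : ∀ (N : Submodule R M) (f : M →ₗ[R] M), N.map f ≤ N) :
    IsPrinDeltaLifting R M := by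
  intro m
  -- the two components of m
  set π₁ : M →ₗ[R] M₁ := M₁.linearProjOfIsCompl M₂ hcompl with hπ₁def
  set π₂ : M →ₗ[R] M₂ := M₂.linearProjOfIsCompl M₁ hcompl.symm with hπ₂def
  set m₁ : M₁ := π₁ m with hm₁def
  set m₂ : M₂ := π₂ m with hm₂def
  have hm : (m₁ : M) + (m₂ : M) = m :=
    Submodule.projection_add_projection_eq_self hcompl m
  -- components of m belong to span {m} by the duo hypothesis
  have hm₁mem : (m₁ : M) ∈ Submodule.span R {m} := by
    refine hduo (Submodule.span R {m}) (M₁.subtype ∘ₗ π₁) ?_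
    exact ⟨m, Submodule.mem_span_singleton_self m, rfl⟩
  have hm₂mem : (m₂ : M) ∈ Submodule.span R {m} := by
    refine hduo (Submodule.span R {m}) (M₂.subtype ∘ₗ π₂) ?_
    exact ⟨m, Submodule.mem_span_singleton_self m, rfl⟩
  -- uniqueness of decompositions
  have huniq : ∀ x₁ ∈ M₁, ∀ x₂ ∈ M₂, ∀ y₁ ∈ M₁, ∀ y₂ ∈ M₂,
      x₁ + x₂ = y₁ + y₂ → x₁ = y₁ ∧ x₂ = y₂ := by
    intro x₁ hx₁ x₂ hx₂ y₁ hy₁ y₂ hy₂ heq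
    have h1 : x₁ - y₁ = y₂ - x₂ := by
      rw [sub_eq_sub_iff_add_eq_add, heq, add_comm]
    have hmem1 : x₁ - y₁ ∈ M₁ := sub_mem hx₁ hy₁
    have hmem2 : x₁ - y₁ ∈ M₂ := h1 ▸ sub_mem hy₂ hx₂
    have h0 : x₁ - y₁ = 0 := (Submodule.disjoint_def.1 hcompl.disjoint) _ hmem1 hmem2
    constructor
    · exact sub_eq_zero.1 h0
    · have : y₂ - x₂ = 0 := h1 ▸ h0
      exact (sub_eq_zero.1 this).symm
  obtain ⟨A₁, B₁, hA₁, hc₁, hd₁⟩ := h₁ m₁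
  obtain ⟨A₂, B₂, hA₂, hc₂, hd₂⟩ := h₂ m₂
  refine ⟨A₁.map M₁.subtype ⊔ A₂.map M₂.subtype, B₁.map M₁.subtype ⊔ B₂.map M₂.subtype,
    ?_, ?_, ?_⟩
  · -- A ≤ span {m}
    refine sup_le ?_ ?_
    · refine (Submodule.map_mono hA₁).trans ?_
      rw [Submodule.map_span]
      simpa using (Submodule.span_singleton_le_iff_mem _ _).2 hm₁mem
    · refine (Submodule.map_mono hA₂).trans ?_
      rw [Submodule.map_span]
      simpa using (Submodule.span_singleton_le_iff_mem _ _).2 hm₂mem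
  · -- IsCompl A B
    constructor
    · -- disjoint
      rw [Submodule.disjoint_def]
      intro x hxA hxB
      obtain ⟨a₁, ha₁, a₂, ha₂, hax⟩ := Submodule.mem_sup.1 hxA
      obtain ⟨b₁, hb₁, b₂, hb₂, hbx⟩ := Submodule.mem_sup.1 hxB
      obtain ⟨u₁, hu₁, rfl⟩ := ha₁
      obtain ⟨u₂, hu₂, rfl⟩ := ha₂
      obtain ⟨v₁, hv₁, rfl⟩ := hb₁
      obtain ⟨v₂, hv₂, rfl⟩ := hb₂
      have heq : (u₁ : M) + u₂ = (v₁ : M) + v₂ := by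
        simp only [Submodule.subtype_apply] at hax hbx
        rw [hax, hbx]
      obtain ⟨e₁, e₂⟩ := huniq _ u₁.2 _ u₂.2 _ v₁.2 _ v₂.2 heq
      have hu₁0 : u₁ = 0 := by
        have : u₁ = v₁ := Subtype.ext e₁
        exact (Submodule.disjoint_def.1 hc₁.disjoint) u₁ hu₁ (this ▸ hv₁)
      have hu₂0 : u₂ = 0 := by
        have : u₂ = v₂ := Subtype.ext e₂
        exact (Submodule.disjoint_def.1 hc₂.disjoint) u₂ hu₂ (this ▸ hv₂)
      rw [← hax, hu₁0, hu₂0]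
      simp
    · -- codisjoint
      rw [codisjoint_iff]
      rw [sup_sup_sup_comm, ← Submodule.map_sup, ← Submodule.map_sup,
        codisjoint_iff.1 hc₁.codisjoint, codisjoint_iff.1 hc₂.codisjoint]
      simp only [Submodule.map_top, Submodule.range_subtype]
      exact codisjoint_iff.1 hcompl.codisjoint
  · -- δ-smallness
    set B := B₁.map M₁.subtype ⊔ B₂.map M₂.subtype with hBdef
    have hB₁le : B₁.map M₁.subtype ≤ B := le_sup_left
    have hB₂le : B₂.map M₂.subtype ≤ B := le_sup_right
    have hB₁M : B₁.map M₁.subtype ≤ M₁ := Submodule.map_subtype_le _ _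
    have hB₂M : B₂.map M₂.subtype ≤ M₂ := Submodule.map_subtype_le _ _
    -- key decomposition of span{m} ⊓ B
    have hkey : Submodule.span R {m} ⊓ B
        = (Submodule.span R {(m₁ : M)} ⊓ B₁.map M₁.subtype)
          ⊔ (Submodule.span R {(m₂ : M)} ⊓ B₂.map M₂.subtype) := by
      apply le_antisymm
      · rintro x ⟨hxs, hxB⟩
        obtain ⟨r, rfl⟩ := Submodule.mem_span_singleton.1 hxs
        obtain ⟨b₁, hb₁, b₂, hb₂, hbx⟩ := Submodule.mem_sup.1 hxB
        have heq : r • (m₁ : M) + r • (m₂ : M) = b₁ + b₂ := by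
          rw [← smul_add, hm, hbx]
        obtain ⟨e₁, e₂⟩ := huniq _ (M₁.smul_mem r m₁.2) _ (M₂.smul_mem r m₂.2)
          _ (hB₁M hb₁) _ (hB₂M hb₂) heq
        refine Submodule.mem_sup.2 ⟨r • (m₁ : M), ⟨?_, e₁ ▸ hb₁⟩,
          r • (m₂ : M), ⟨?_, e₂ ▸ hb₂⟩, by rw [← smul_add, hm]⟩
        · exact Submodule.mem_span_singleton.2 ⟨r, rfl⟩
        · exact Submodule.mem_span_singleton.2 ⟨r, rfl⟩
      · refine sup_le (le_inf ?_ (inf_le_right.trans hB₁le))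
          (le_inf ?_ (inf_le_right.trans hB₂le))
        · exact inf_le_left.trans ((Submodule.span_singleton_le_iff_mem _ _).2 hm₁mem)
        · exact inf_le_left.trans ((Submodule.span_singleton_le_iff_mem _ _).2 hm₂mem)
    -- comap of the sup is the sup of the comaps
    have hN₁B : Submodule.span R {(m₁ : M)} ⊓ B₁.map M₁.subtype ≤ B :=
      inf_le_right.trans hB₁le
    have hN₂B : Submodule.span R {(m₂ : M)} ⊓ B₂.map M₂.subtype ≤ B :=
      inf_le_right.trans hB₂le
    have hcomap : (Submodule.span R {m} ⊓ B).comap B.subtype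
        = (Submodule.span R {(m₁ : M)} ⊓ B₁.map M₁.subtype).comap B.subtype
          ⊔ (Submodule.span R {(m₂ : M)} ⊓ B₂.map M₂.subtype).comap B.subtype := by
      apply le_antisymm
      · intro x hx
        rw [Submodule.mem_comap, hkey] at hx
        obtain ⟨n₁, hn₁, n₂, hn₂, hnx⟩ := Submodule.mem_sup.1 hx
        refine Submodule.mem_sup.2 ⟨⟨n₁, hN₁B hn₁⟩, hn₁, ⟨n₂, hN₂B hn₂⟩, hn₂, ?_⟩
        exact Subtype.ext hnx
      · refine sup_le ?_ ?_ <;> intro x hx <;> rw [Submodule.mem_comap, hkey]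
        · exact Submodule.mem_sup_left hx
        · exact Submodule.mem_sup_right hx
    rw [hcomap]
    have hspan₁ : (Submodule.span R {m₁}).map M₁.subtype = Submodule.span R {(m₁ : M)} := by
      rw [Submodule.map_span]; simp
    have hspan₂ : (Submodule.span R {m₂}).map M₂.subtype = Submodule.span R {(m₂ : M)} := by
      rw [Submodule.map_span]; simp
    refine aux_deltaSmall_sup ?_ ?_
    · have := aux_transfer hB₁le hd₁
      rwa [hspan₁] at this
    · have := aux_transfer hB₂le hd₂
      rwa [hspan₂] at this
end

section
/- Let M be a nonzero right R-module. Then M is principally δ-hollow if and only if M is a local module or Rad_δ(M) = M. -/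
/-- `Rad_δ(M)`: the sum of all δ-small submodules of `M`. -/
def deltaRad (R M : Type*) [Ring R] [AddCommGroup M] [Module R M] : Submodule R M :=
  sSup {N : Submodule R M | IsDeltaSmall R N}

/-- A module is *principally semisimple* if every cyclic submodule is a direct summand. -/
def IsPrinSemisimple (R M : Type*) [Ring R] [AddCommGroup M] [Module R M] : Prop :=
  ∀ m : M, ∃ B : Submodule R M, IsCompl (Submodule.span R {m}) B

/-- A module `M` is *principally δ-hollow* if every proper cyclic submodule of `M`
is δ-small in `M`. -/
def IsPrinDeltaHollow (R M : Type*) [Ring R] [AddCommGroup M] [Module R M] : Prop :=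
  ∀ m : M, Submodule.span R {m} ≠ ⊤ → IsDeltaSmall R (Submodule.span R {m})

lemma singular_quotient_mono {R M : Type*} [Ring R] [AddCommGroup M] [Module R M]
    {X Y : Submodule R M} (h : X ≤ Y) (hX : IsSingularModule R (M ⧸ X)) :
    IsSingularModule R (M ⧸ Y) := by
  intro y
  obtain ⟨m, rfl⟩ := Submodule.Quotient.mk_surjective Y y
  apply essential_mono _ (hX (Submodule.Quotient.mk m))
  intro r hr
  simp only [LinearMap.mem_ker, LinearMap.toSpanSingleton_apply] at hr ⊢
  rw [← Submodule.Quotient.mk_smul, Submodule.Quotient.mk_eq_zero] at hr ⊢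
  exact h hr

lemma deltaSmall_mono_s14 {R M : Type*} [Ring R] [AddCommGroup M] [Module R M]
    {N N' : Submodule R M} (h : N ≤ N') (hN' : IsDeltaSmall R N') :
    IsDeltaSmall R N' → IsDeltaSmall R N := by
  intro _ X hX hsing
  exact hN' X (top_le_iff.mp (hX ▸ sup_le_sup_right h X)) hsing

lemma deltaSmall_bot {R M : Type*} [Ring R] [AddCommGroup M] [Module R M] :
    IsDeltaSmall R (⊥ : Submodule R M) := by
  intro X hX _
  simpa using hX

lemma deltaSmall_sup {R M : Type*} [Ring R] [AddCommGroup M] [Module R M]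
    {N₁ N₂ : Submodule R M} (h1 : IsDeltaSmall R N₁) (h2 : IsDeltaSmall R N₂) :
    IsDeltaSmall R (N₁ ⊔ N₂) := by
  intro X hX hsing
  have h' : N₂ ⊔ X = ⊤ :=
    h1 (N₂ ⊔ X) (by rw [← sup_assoc]; exact hX)
      (singular_quotient_mono le_sup_right hsing)
  exact h2 X h' hsing

lemma deltaSmall_of_mem_deltaRad {R M : Type*} [Ring R] [AddCommGroup M] [Module R M]
    {m : M} (hm : m ∈ deltaRad R M) : IsDeltaSmall R (Submodule.span R {m}) := by
  have hc := (CompleteLattice.isCompactElement_iff_exists_le_sSup_of_le_sSup _ _).mp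
    (Submodule.singleton_span_isCompactElement (R := R) m)
  obtain ⟨t, hts, hle⟩ := hc _ ((Submodule.span_singleton_le_iff_mem m _).mpr hm)
  have hsup : IsDeltaSmall R (t.sup id) :=
    Finset.sup_induction deltaSmall_bot (fun a ha b hb => deltaSmall_sup ha hb)
      (fun i hi => hts hi)
  exact deltaSmall_mono_s14 hle hsup hsup

theorem isPrinDeltaHollow_iff_local_or_deltaRad_eq_top
    {R M : Type*} [Ring R] [AddCommGroup M] [Module R M] [Nontrivial M] :
    IsPrinDeltaHollow R M ↔
      ((∃ N : Submodule R M, IsCoatom N ∧ ∀ K : Submodule R M, K ≠ ⊤ → K ≤ N) ∨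
        deltaRad R M = ⊤) := by
  constructor
  · intro h
    by_cases hrad : deltaRad R M = ⊤
    · exact Or.inr hrad
    · left
      refine ⟨deltaRad R M, ⟨hrad, ?_⟩, ?_⟩
      · intro b hb
        by_contra hb'
        have : b ≤ deltaRad R M := by
          intro x hx
          have hspan : Submodule.span R {x} ≠ ⊤ := by
            intro he
            exact hb' (top_le_iff.mp (he ▸ (Submodule.span_singleton_le_iff_mem x b).mpr hx))
          exact Submodule.mem_sSup_of_mem (h x hspan) (Submodule.mem_span_singleton_self x)
        exact absurd (lt_of_lt_of_le hb this) (lt_irrefl _)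
      · intro K hK x hx
        have hspan : Submodule.span R {x} ≠ ⊤ := by
          intro he
          exact hK (top_le_iff.mp (he ▸ (Submodule.span_singleton_le_iff_mem x K).mpr hx))
        exact Submodule.mem_sSup_of_mem (h x hspan) (Submodule.mem_span_singleton_self x)
  · rintro (⟨N, hN, hle⟩ | hrad)
    · intro m hm X hX _
      by_contra hX'
      have h1 : Submodule.span R {m} ≤ N := hle _ hm
      have h2 : X ≤ N := hle _ hX'
      have : (⊤ : Submodule R M) ≤ N := hX ▸ sup_le h1 h2
      exact hN.1 (top_le_iff.mp this)
    · intro m _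
      exact deltaSmall_of_mem_deltaRad (hrad ▸ Submodule.mem_top)
end

section
/- Let R be a ring. The right R-module R is principally δ-semiperfect (equivalently, R/aR has a projective δ-cover for every a ∈ R) if and only if R is principally δ-lifting as a right R-module. -/
section Aux
variable {R : Type*} [Ring R] {M M' : Type*} [AddCommGroup M] [Module R M]
  [AddCommGroup M'] [Module R M']

lemma IsEssentialSubmodule.mono {K K' : Submodule R M} (h : IsEssentialSubmodule K)
    (hle : K ≤ K') : IsEssentialSubmodule K' := by
  intro N hN hbot
  exact h N hN (le_bot_iff.mp ((inf_le_inf_right N hle).trans hbot.le))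

lemma isSingular_of_injective (g : M →ₗ[R] M') (hg : Function.Injective g)
    (hs : IsSingularModule R M') : IsSingularModule R M := by
  intro x
  have hker : LinearMap.ker (LinearMap.toSpanSingleton R M x)
      = LinearMap.ker (LinearMap.toSpanSingleton R M' (g x)) := by
    ext r
    simp only [LinearMap.mem_ker, LinearMap.toSpanSingleton_apply]
    constructor
    · intro h; rw [← map_smul, h, map_zero]
    · intro h; apply hg; rw [map_smul, h, map_zero]
  rw [hker]; exact hs (g x)

lemma isSingular_of_surjective (g : M →ₗ[R] M') (hg : Function.Surjective g)
    (hs : IsSingularModule R M) : IsSingularModule R M' := by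
  intro x'
  obtain ⟨x, rfl⟩ := hg x'
  refine (hs x).mono ?_
  intro r hr
  simp only [LinearMap.mem_ker, LinearMap.toSpanSingleton_apply] at hr ⊢
  rw [← map_smul, hr, map_zero]

lemma IsDeltaSmall.mono {K K' : Submodule R M} (h : IsDeltaSmall R K) (hle : K' ≤ K) :
    IsDeltaSmall R K' := by
  intro X hsup hsing
  refine h X ?_ hsing
  rw [eq_top_iff, ← hsup]
  exact sup_le_sup_right hle X

lemma IsDeltaSmall.map_equiv (e : M ≃ₗ[R] M') {K : Submodule R M}
    (h : IsDeltaSmall R K) : IsDeltaSmall R (K.map (e : M →ₗ[R] M')) := by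
  intro X hsup hsing
  set X₀ := X.comap (e : M →ₗ[R] M') with hX₀
  have hmapX₀ : X₀.map (e : M →ₗ[R] M') = X :=
    Submodule.map_comap_eq_of_surjective e.surjective X
  have h1 : K ⊔ X₀ = ⊤ := by
    apply_fun Submodule.map (e : M →ₗ[R] M') using
      Submodule.map_injective_of_injective e.injective
    rw [Submodule.map_sup, hmapX₀, hsup, Submodule.map_top, LinearEquiv.range]
  have hsing' : IsSingularModule R (M ⧸ X₀) := by
    refine isSingular_of_injective
      ((Submodule.Quotient.equiv X₀ X e hmapX₀ : _ ≃ₗ[R] _) : _ →ₗ[R] M' ⧸ X)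
      (Submodule.Quotient.equiv X₀ X e hmapX₀).injective hsing
  have h2 := h X₀ h1 hsing'
  rw [← hmapX₀, h2, Submodule.map_top, LinearEquiv.range]

/-- δ-smallness passes to direct summands. -/
lemma IsDeltaSmall.comap_subtype {K X Y : Submodule R M} (hK : IsDeltaSmall R K)
    (hKX : K ≤ X) (hc : IsCompl X Y) : IsDeltaSmall R (K.comap X.subtype) := by
  intro X' hsup hsing
  set X'' : Submodule R M := X'.map X.subtype with hX''
  have hmapsup : K ⊔ X'' = X := by
    have := congrArg (Submodule.map X.subtype) hsup
    rwa [Submodule.map_sup, Submodule.map_comap_subtype, inf_of_le_right hKX,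
      Submodule.map_top, Submodule.range_subtype] at this
  have hKW : K ⊔ (X'' ⊔ Y) = ⊤ := by
    rw [← sup_assoc, hmapsup, hc.sup_eq_top]
  have hX''W : X'' ≤ X'' ⊔ Y := le_sup_left
  -- the quotient M / (X'' ⊔ Y) is singular, being an image of X / X'
  have hsing' : IsSingularModule R (M ⧸ (X'' ⊔ Y)) := by
    refine isSingular_of_surjective
      (Submodule.mapQ X' (X'' ⊔ Y) X.subtype ?_) ?_ hsing
    · intro x hx
      exact le_sup_left (a := X'') (Submodule.mem_map_of_mem hx)
    · intro z
      obtain ⟨mm, rfl⟩ := Submodule.Quotient.mk_surjective _ z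
      have : mm ∈ X ⊔ Y := by rw [hc.sup_eq_top]; trivial
      obtain ⟨x, hx, y, hy, rfl⟩ := Submodule.mem_sup.mp this
      refine ⟨Submodule.Quotient.mk ⟨x, hx⟩, ?_⟩
      rw [Submodule.mapQ_apply]
      have : Submodule.Quotient.mk (p := X'' ⊔ Y) (x + y)
          = Submodule.Quotient.mk x := by
        rw [Submodule.Quotient.eq]
        simpa using le_sup_right (a := X'') hy
      rw [this]; rfl
  have hW : X'' ⊔ Y = ⊤ := hK _ hKW hsing'
  have hX'' : X'' = X := by
    have h2 : (X'' ⊔ Y) ⊓ X = X'' ⊔ (Y ⊓ X) :=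
      sup_inf_assoc_of_le _ (Submodule.map_subtype_le _ _)
    rw [hW, top_inf_eq, hc.symm.disjoint.eq_bot, sup_bot_eq] at h2
    exact h2.symm
  have := congrArg (Submodule.comap X.subtype) hX''
  rwa [Submodule.comap_map_eq_of_injective X.injective_subtype, Submodule.comap_subtype_self]
    at this

/-- quotient by a "δ-essentially closed" submodule is singular -/
lemma singular_quotient_of_ess {NN W : Submodule R M} (hsup : NN ⊔ W = ⊤)
    (hess : ∀ U : Submodule R M, U ≤ NN → U ⊓ W = ⊥ → U = ⊥) :
    IsSingularModule R (M ⧸ W) := by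
  intro z
  obtain ⟨mm, rfl⟩ := Submodule.Quotient.mk_surjective _ z
  have : mm ∈ NN ⊔ W := by rw [hsup]; trivial
  obtain ⟨n, hn, w, hw, rfl⟩ := Submodule.mem_sup.mp this
  intro J hJ
  -- consider J • n
  set Jn : Submodule R M := J.map (LinearMap.toSpanSingleton R M n) with hJn
  have hJnNN : Jn ≤ NN := by
    rintro _ ⟨r, hr, rfl⟩
    exact NN.smul_mem r hn
  by_cases hbot : Jn ⊓ W = ⊥
  · -- then Jn = ⊥, so J is contained in the annihilator
    have hJn0 : Jn = ⊥ := hess Jn hJnNN hbot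
    intro hcon
    apply hJ
    rw [← hcon, eq_comm, inf_eq_right]
    intro r hr
    have hrn : r • n = 0 := by
      have : r • n ∈ Jn := Submodule.mem_map_of_mem hr
      rwa [hJn0, Submodule.mem_bot] at this
    simp only [LinearMap.mem_ker, LinearMap.toSpanSingleton_apply]
    rw [show r • Submodule.Quotient.mk (p := W) (n + w) =
      Submodule.Quotient.mk (r • (n + w)) from rfl]
    rw [Submodule.Quotient.mk_eq_zero]
    rw [smul_add, hrn, zero_add]
    exact W.smul_mem r hw
  · -- pick 0 ≠ v = j • n ∈ W
    obtain ⟨v, hv, hv0⟩ := Submodule.exists_mem_ne_zero_of_ne_bot hbot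
    obtain ⟨⟨j, hj, rfl⟩, hvW⟩ := hv
    intro hcon
    apply hv0
    have hjker : j ∈ LinearMap.ker
        (LinearMap.toSpanSingleton R (M ⧸ W) (Submodule.Quotient.mk (n + w))) := by
      simp only [LinearMap.mem_ker, LinearMap.toSpanSingleton_apply]
      rw [show j • Submodule.Quotient.mk (p := W) (n + w) =
        Submodule.Quotient.mk (j • (n + w)) from rfl]
      rw [Submodule.Quotient.mk_eq_zero, smul_add]
      exact W.add_mem hvW (W.smul_mem j hw)
    have : j ∈ (⊥ : Submodule R R) := by
      rw [← hcon]; exact ⟨hjker, hj⟩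
    rw [Submodule.mem_bot] at this
    rw [this, map_zero]

/-- Zhou's lemma: if `NN` is δ-small and `X ⊔ NN = ⊤`, then `X` has a complement inside `NN`. -/
lemma exists_compl_le_of_deltaSmall {NN X : Submodule R M} (hN : IsDeltaSmall R NN)
    (hsup : X ⊔ NN = ⊤) : ∃ Y : Submodule R M, Y ≤ NN ∧ X ⊓ Y = ⊥ ∧ X ⊔ Y = ⊤ := by
  obtain ⟨Y, -, hYs, hYmax⟩ := zorn_le_nonempty₀
    {Y : Submodule R M | Y ≤ NN ∧ X ⊓ Y = ⊥}
    (fun c hc hchain y hy => by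
      refine ⟨sSup c, ⟨sSup_le fun z hz => (hc hz).1, ?_⟩, fun z hz => le_sSup hz⟩
      rw [eq_bot_iff]
      rintro v ⟨hvX, hvS⟩
      obtain ⟨z, hz, hvz⟩ := (Submodule.mem_sSup_of_directed ⟨y, hy⟩
        hchain.directedOn).mp hvS
      have := (hc hz).2
      rw [← this]
      exact ⟨hvX, hvz⟩)
    ⊥ ⟨bot_le, by simp⟩
  obtain ⟨hYN, hXY⟩ := hYs
  refine ⟨Y, hYN, hXY, ?_⟩
  have hess : ∀ U : Submodule R M, U ≤ NN → U ⊓ (X ⊔ Y) = ⊥ → U = ⊥ := by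
    intro U hUN hU
    have hmem : Y ⊔ U ∈ {Y : Submodule R M | Y ≤ NN ∧ X ⊓ Y = ⊥} := by
      refine ⟨sup_le hYN hUN, ?_⟩
      rw [eq_bot_iff]
      rintro v ⟨hvX, hvYU⟩
      obtain ⟨yy, hyy, u, hu, rfl⟩ := Submodule.mem_sup.mp hvYU
      have hu0 : u = 0 := by
        have : u ∈ U ⊓ (X ⊔ Y) := by
          refine ⟨hu, ?_⟩
          rw [show u = yy + u - yy by abel]
          exact Submodule.sub_mem _ (le_sup_left (b := Y) hvX) (le_sup_right (a := X) hyy)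
        rw [hU] at this; simpa using this
      rw [hu0, add_zero] at hvX ⊢
      have : yy ∈ X ⊓ Y := ⟨hvX, hyy⟩
      rw [hXY] at this; simpa using this
    have hle : Y ⊔ U ≤ Y := hYmax hmem le_sup_left
    have hUY : U ≤ Y := le_trans le_sup_right hle
    rw [eq_bot_iff, ← hU]
    exact le_inf le_rfl (le_trans hUY le_sup_right)
  have hsup' : NN ⊔ (X ⊔ Y) = ⊤ := by
    rw [eq_top_iff, ← hsup]
    exact sup_le (le_trans le_sup_left le_sup_right) le_sup_left
  exact hN _ hsup' (singular_quotient_of_ess hsup' hess)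

end Aux

universe uR uX uP

/-- A *projective δ-cover* of a module `X`: a projective module `P` together with a
surjective homomorphism `f : P → X` whose kernel is δ-small in `P`. -/
structure ProjectiveDeltaCover (R : Type uR) (X : Type uX) [Ring R]
    [AddCommGroup X] [Module R X] : Type (max uR uX (uP + 1)) where
  P : Type uP
  [addCommGroup : AddCommGroup P]
  [module : Module R P]
  projective : Module.Projective R P
  f : P →ₗ[R] X
  surjective : Function.Surjective f
  ker_deltaSmall : IsDeltaSmall R (LinearMap.ker f)

/-- A module `M` is *principally δ-semiperfect* if for each `m ∈ M` the factor module
`M/mR` has a projective δ-cover. -/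
def IsPrinDeltaSemiperfect (R : Type uR) (M : Type uX) [Ring R] [AddCommGroup M]
    [Module R M] : Prop :=
  ∀ m : M, Nonempty (ProjectiveDeltaCover.{uR, uX, uP} R (M ⧸ Submodule.span R {m}))

theorem ring_isPrinDeltaSemiperfect_iff_isPrinDeltaLifting
    (R : Type uR) [Ring R] :
    IsPrinDeltaSemiperfect.{uR, uR, uR} R R ↔ IsPrinDeltaLifting R R := by
  constructor
  · -- semiperfect → lifting
    intro hsp m
    obtain ⟨c⟩ := hsp m
    letI := c.addCommGroup
    letI := c.module
    haveI := c.projective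
    obtain ⟨h, hh⟩ := Module.projective_lifting_property c.f
      (Submodule.span R {m}).mkQ c.surjective
    have hfh : ∀ r : R, c.f (h r) = (Submodule.span R {m}).mkQ r :=
      fun r => LinearMap.congr_fun hh r
    have hsupXN : LinearMap.range h ⊔ LinearMap.ker c.f = ⊤ := by
      rw [eq_top_iff]
      rintro p -
      obtain ⟨r, hr⟩ := Submodule.mkQ_surjective (Submodule.span R {m}) (c.f p)
      refine Submodule.mem_sup.mpr ⟨h r, ⟨r, rfl⟩, p - h r, ?_, by abel⟩
      simp only [LinearMap.mem_ker, map_sub, hfh, hr, sub_self]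
    obtain ⟨Y, hYN, hXYd, hXYs⟩ :=
      exists_compl_le_of_deltaSmall c.ker_deltaSmall hsupXN
    have hcXY : IsCompl (LinearMap.range h) Y :=
      ⟨disjoint_iff.mpr hXYd, codisjoint_iff.mpr hXYs⟩
    haveI hXproj : Module.Projective R ↥(LinearMap.range h) :=
      Module.Projective.of_split (LinearMap.range h).subtype
        (Submodule.linearProjOfIsCompl _ _ hcXY)
        (Submodule.linearProjOfIsCompl_comp_subtype hcXY)
    obtain ⟨s, hs⟩ := Module.projective_lifting_property h.rangeRestrict LinearMap.id
      h.surjective_rangeRestrict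
    have hss : ∀ z : ↥(LinearMap.range h), h.rangeRestrict (s z) = z :=
      fun z => LinearMap.congr_fun hs z
    have hhs : ∀ z : ↥(LinearMap.range h), h (s z) = (z : c.P) := by
      intro z
      have := congrArg (Subtype.val) (hss z)
      simpa using this
    have hsinj : Function.Injective s := by
      intro a b hab
      have : h.rangeRestrict (s a) = h.rangeRestrict (s b) := by rw [hab]
      rwa [hss, hss] at this
    refine ⟨LinearMap.ker h, LinearMap.range s, ?_, ?_, ?_⟩
    · -- ker h ≤ Rm
      intro r hr
      rw [LinearMap.mem_ker] at hr
      have : (Submodule.span R {m}).mkQ r = 0 := by rw [← hfh, hr, map_zero]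
      rwa [Submodule.mkQ_apply, Submodule.Quotient.mk_eq_zero] at this
    · -- IsCompl (ker h) (range s)
      constructor
      · rw [disjoint_iff, eq_bot_iff]
        rintro r ⟨hr1, x, rfl⟩
        rw [SetLike.mem_coe, LinearMap.mem_ker, hhs] at hr1
        have : x = 0 := Subtype.ext hr1
        simp [this]
      · rw [codisjoint_iff, eq_top_iff]
        rintro r -
        refine Submodule.mem_sup.mpr ⟨r - s (h.rangeRestrict r), ?_,
          s (h.rangeRestrict r), ⟨_, rfl⟩, by abel⟩
        rw [LinearMap.mem_ker, map_sub, hhs]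
        simp
    · -- δ-smallness
      have hK : IsDeltaSmall R (LinearMap.range h ⊓ LinearMap.ker c.f) :=
        c.ker_deltaSmall.mono inf_le_right
      have hK2 := hK.comap_subtype inf_le_left hcXY
      have hK3 := hK2.map_equiv (LinearEquiv.ofInjective s hsinj)
      have hEq : ((Submodule.span R {m} ⊓ LinearMap.range s).comap
            (LinearMap.range s).subtype)
          = (((LinearMap.range h ⊓ LinearMap.ker c.f).comap
              (LinearMap.range h).subtype).map
            ((LinearEquiv.ofInjective s hsinj : _ ≃ₗ[R] _) : _ →ₗ[R] ↥(LinearMap.range s))) := by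
        ext z
        simp only [Submodule.mem_comap, Submodule.mem_map, Submodule.mem_inf,
          Submodule.coe_subtype, LinearMap.mem_ker]
        constructor
        · rintro ⟨hz1, -⟩
          obtain ⟨x, hx⟩ := z.2
          refine ⟨x, ⟨x.2, ?_⟩, ?_⟩
          · rw [← hhs x, hx, hfh, Submodule.mkQ_apply, Submodule.Quotient.mk_eq_zero]
            exact hz1
          · apply Subtype.ext
            rw [LinearEquiv.coe_coe, LinearEquiv.ofInjective_apply, hx]
        · rintro ⟨x, ⟨-, hx2⟩, rfl⟩
          constructor
          · have hval : ((LinearEquiv.ofInjective s hsinj x : ↥(LinearMap.range s)) : R)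
                = s x := by rw [LinearEquiv.ofInjective_apply]
            rw [LinearEquiv.coe_coe, hval]
            have : (Submodule.span R {m}).mkQ (s x) = 0 := by
              rw [← hfh, hhs]
              simpa using hx2
            rwa [Submodule.mkQ_apply, Submodule.Quotient.mk_eq_zero] at this
          · exact ((LinearEquiv.ofInjective s hsinj) x).2
      rw [hEq]
      exact hK3
  · -- lifting → semiperfect
    intro hl m
    obtain ⟨A, B, hA, hc, hδ⟩ := hl m
    refine ⟨{ P := ↥B
              projective := Module.Projective.of_split B.subtype
                (Submodule.linearProjOfIsCompl _ _ hc.symm)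
                (Submodule.linearProjOfIsCompl_comp_subtype hc.symm)
              f := (Submodule.span R {m}).mkQ.comp B.subtype
              surjective := ?_
              ker_deltaSmall := ?_ }⟩
    · intro z
      obtain ⟨r, rfl⟩ := Submodule.mkQ_surjective _ z
      have : r ∈ Submodule.span R {m} ⊔ B := by
        rw [eq_top_iff.mpr (le_trans (hc.sup_eq_top).ge (sup_le_sup_right hA B))]
        trivial
      obtain ⟨x, hx, b, hb, rfl⟩ := Submodule.mem_sup.mp this
      refine ⟨⟨b, hb⟩, ?_⟩
      simp only [LinearMap.comp_apply, Submodule.coe_subtype, Submodule.mkQ_apply]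
      rw [Submodule.Quotient.eq]
      simpa using Submodule.neg_mem _ hx
    · have hker : LinearMap.ker ((Submodule.span R {m}).mkQ.comp B.subtype)
          = (Submodule.span R {m} ⊓ B).comap B.subtype := by
        ext b
        simp only [LinearMap.mem_ker, LinearMap.comp_apply, Submodule.coe_subtype,
          Submodule.mkQ_apply, Submodule.Quotient.mk_eq_zero, Submodule.mem_comap,
          Submodule.mem_inf]
        exact ⟨fun hb => ⟨hb, b.2⟩, fun hb => hb.1⟩
      rw [hker]
      exact hδ
end
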